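/- Under the Mallows model with 0 < φ < 1, the expected positions respect the center ordering: if σ is drawn with probability φ^{K_τ(σ₀,σ)}/Z, then E[σ(i)] > E[σ(j)] if and only if σ₀(i) > σ₀(j). -/

import Mathlib

def kendallTau {N : ℕ} (σ₁ σ₂ : Equiv.Perm (Fin N)) : ℕ :=
  (Finset.univ.filter fun p : Fin N × Fin N =>
    p.1 < p.2 ∧ ((σ₁ p.1 < σ₁ p.2 ∧ σ₂ p.2 < σ₂ p.1) ∨
                 (σ₁ p.2 < σ₁ p.1 ∧ σ₂ p.1 < σ₂ p.2))).card

/-- The Mallows normalization constant. -/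
noncomputable def mallowsZ (N : ℕ) (φ : ℝ) (σ₀ : Equiv.Perm (Fin N)) : ℝ :=
  ∑ σ : Equiv.Perm (Fin N), φ ^ kendallTau σ₀ σ

/-- Probability of an event under the Mallows distribution with center `σ₀`. -/
noncomputable def mallowsProb (N : ℕ) (φ : ℝ) (σ₀ : Equiv.Perm (Fin N))
    (E : Equiv.Perm (Fin N) → Prop) [DecidablePred E] : ℝ :=
  (∑ σ ∈ Finset.univ.filter E, φ ^ kendallTau σ₀ σ) / mallowsZ N φ σ₀

/-- Expected position of element `i` under the Mallows distribution. -/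
noncomputable def mallowsExp (N : ℕ) (φ : ℝ) (σ₀ : Equiv.Perm (Fin N)) (i : Fin N) : ℝ :=
  (∑ σ : Equiv.Perm (Fin N), ((σ i : ℕ) : ℝ) * φ ^ kendallTau σ₀ σ) / mallowsZ N φ σ₀

/-! ### Auxiliary material -/

@[simp] lemma Equiv.Perm.inv_apply_self {α : Type*} (f : Equiv.Perm α) (x : α) : f⁻¹ (f x) = x :=
  f.symm_apply_apply x

@[simp] lemma Equiv.Perm.apply_inv_self {α : Type*} (f : Equiv.Perm α) (x : α) : f (f⁻¹ x) = x :=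
  f.apply_symm_apply x

/-- Number of inversions of a permutation. -/
def invCount {N : ℕ} (τ : Equiv.Perm (Fin N)) : ℕ :=
  (Finset.univ.filter fun p : Fin N × Fin N => p.1 < p.2 ∧ τ p.2 < τ p.1).card

lemma invCount_le_mul_swap {N : ℕ} (τ : Equiv.Perm (Fin N)) {u v : Fin N}
    (huv : u < v) (hτ : τ u < τ v) : invCount τ ≤ invCount (τ * Equiv.swap u v) := by
  classical
  unfold invCount
  apply Finset.card_le_card_of_injOn
    (fun p => if Equiv.swap u v p.1 < Equiv.swap u v p.2
      then (Equiv.swap u v p.1, Equiv.swap u v p.2) else p)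
  · intro p hp
    simp only [Finset.mem_coe, Finset.mem_filter, Finset.mem_univ, true_and] at hp ⊢
    obtain ⟨h1, h2⟩ := hp
    by_cases h : Equiv.swap u v p.1 < Equiv.swap u v p.2
    · simp only [if_pos h, Equiv.Perm.mul_apply, Equiv.swap_apply_self]
      exact ⟨h, h2⟩
    · simp only [if_neg h, Equiv.Perm.mul_apply]
      refine ⟨h1, ?_⟩
      by_cases e1 : p.1 = u
      · by_cases e2 : p.2 = v
        · rw [e1, e2] at h2; exact absurd hτ (not_lt.2 h2.le)
        · have e2' : p.2 ≠ u := ne_of_gt (e1 ▸ h1)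
          rw [e1, Equiv.swap_apply_left, Equiv.swap_apply_of_ne_of_ne e2' e2]
          calc τ p.2 < τ u := e1 ▸ h2
            _ < τ v := hτ
      · by_cases e3 : p.1 = v
        · exfalso; apply h
          have h2v : v < p.2 := e3 ▸ h1
          rw [e3, Equiv.swap_apply_right,
            Equiv.swap_apply_of_ne_of_ne (ne_of_gt (lt_trans huv h2v)) (ne_of_gt h2v)]
          exact lt_trans huv h2v
        · by_cases e4 : p.2 = u
          · exfalso; apply h
            have hu : p.1 < u := e4 ▸ h1
            rw [e4, Equiv.swap_apply_left, Equiv.swap_apply_of_ne_of_ne e1 e3]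
            exact lt_trans hu huv
          · by_cases e5 : p.2 = v
            · rw [e5, Equiv.swap_apply_right, Equiv.swap_apply_of_ne_of_ne e1 e3]
              calc τ u < τ v := hτ
                _ < τ p.1 := e5 ▸ h2
            · exfalso; apply h
              rw [Equiv.swap_apply_of_ne_of_ne e1 e3, Equiv.swap_apply_of_ne_of_ne e4 e5]
              exact h1
  · intro p hp q hq hpq
    have hp1 : p.1 < p.2 := (Finset.mem_filter.1 (Finset.mem_coe.1 hp)).2.1
    have hq1 : q.1 < q.2 := (Finset.mem_filter.1 (Finset.mem_coe.1 hq)).2.1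
    simp only at hpq
    by_cases ha : Equiv.swap u v p.1 < Equiv.swap u v p.2 <;>
      by_cases hb : Equiv.swap u v q.1 < Equiv.swap u v q.2
    · rw [if_pos ha, if_pos hb, Prod.mk.injEq] at hpq
      exact Prod.ext ((Equiv.swap u v).injective hpq.1) ((Equiv.swap u v).injective hpq.2)
    · rw [if_pos ha, if_neg hb] at hpq
      exfalso; apply hb
      have h1 : q.1 = Equiv.swap u v p.1 := by rw [← hpq]
      have h2 : q.2 = Equiv.swap u v p.2 := by rw [← hpq]
      rw [h1, h2, Equiv.swap_apply_self, Equiv.swap_apply_self]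
      exact hp1
    · rw [if_neg ha, if_pos hb] at hpq
      exfalso; apply ha
      have h1 : p.1 = Equiv.swap u v q.1 := by rw [hpq]
      have h2 : p.2 = Equiv.swap u v q.2 := by rw [hpq]
      rw [h1, h2, Equiv.swap_apply_self, Equiv.swap_apply_self]
      exact hq1
    · rwa [if_neg ha, if_neg hb] at hpq

lemma kendallTau_eq_invCount {N : ℕ} (σ₀ σ : Equiv.Perm (Fin N)) :
    kendallTau σ₀ σ = invCount (σ * σ₀⁻¹) := by
  classical
  unfold kendallTau invCount
  apply Finset.card_nbij'
    (i := fun p : Fin N × Fin N =>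
      if σ₀ p.1 < σ₀ p.2 then (σ₀ p.1, σ₀ p.2) else (σ₀ p.2, σ₀ p.1))
    (j := fun q : Fin N × Fin N =>
      if σ₀⁻¹ q.1 < σ₀⁻¹ q.2 then (σ₀⁻¹ q.1, σ₀⁻¹ q.2) else (σ₀⁻¹ q.2, σ₀⁻¹ q.1))
  · intro p hp
    simp only [Finset.mem_coe, Finset.mem_filter, Finset.mem_univ, true_and] at hp ⊢
    obtain ⟨h1, hd⟩ := hp
    by_cases hσ : σ₀ p.1 < σ₀ p.2
    · simp only [if_pos hσ, Equiv.Perm.mul_apply, Equiv.Perm.inv_apply_self]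
      refine ⟨hσ, ?_⟩
      rcases hd with ⟨_, hb⟩ | ⟨ha, _⟩
      · exact hb
      · exact absurd hσ (not_lt.2 ha.le)
    · simp only [if_neg hσ, Equiv.Perm.mul_apply, Equiv.Perm.inv_apply_self]
      have hne : σ₀ p.1 ≠ σ₀ p.2 := fun e => (ne_of_lt h1) (σ₀.injective e)
      have hσ' : σ₀ p.2 < σ₀ p.1 := lt_of_le_of_ne (not_lt.1 hσ) (Ne.symm hne)
      refine ⟨hσ', ?_⟩
      rcases hd with ⟨ha, _⟩ | ⟨_, hb⟩
      · exact absurd hσ' (not_lt.2 ha.le)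
      · exact hb
  · intro q hq
    simp only [Finset.mem_coe, Finset.mem_filter, Finset.mem_univ, true_and] at hq ⊢
    simp only [Equiv.Perm.mul_apply] at hq ⊢
    obtain ⟨h1, h2⟩ := hq
    by_cases hσ : σ₀⁻¹ q.1 < σ₀⁻¹ q.2
    · simp only [if_pos hσ, Equiv.Perm.apply_inv_self]
      exact ⟨hσ, Or.inl ⟨h1, h2⟩⟩
    · have hne : σ₀⁻¹ q.1 ≠ σ₀⁻¹ q.2 := fun e => (ne_of_lt h1) (σ₀⁻¹.injective e)
      have hσ' : σ₀⁻¹ q.2 < σ₀⁻¹ q.1 := lt_of_le_of_ne (not_lt.1 hσ) (Ne.symm hne)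
      simp only [if_neg hσ, Equiv.Perm.apply_inv_self]
      exact ⟨hσ', Or.inr ⟨h1, h2⟩⟩
  · intro p hp
    simp only [Finset.mem_coe, Finset.mem_filter, Finset.mem_univ, true_and] at hp
    obtain ⟨h1, _⟩ := hp
    by_cases hσ : σ₀ p.1 < σ₀ p.2
    · simp only [if_pos hσ, Equiv.Perm.inv_apply_self, if_pos h1]
    · simp only [if_neg hσ, Equiv.Perm.inv_apply_self, if_neg (asymm h1)]
  · intro q hq
    simp only [Finset.mem_coe, Finset.mem_filter, Finset.mem_univ, true_and] at hq
    obtain ⟨h1, _⟩ := hq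
    by_cases hσ : σ₀⁻¹ q.1 < σ₀⁻¹ q.2
    · simp only [if_pos hσ, Equiv.Perm.apply_inv_self, if_pos h1]
    · simp only [if_neg hσ, Equiv.Perm.apply_inv_self, if_neg (asymm h1)]

lemma kendallTau_le_mul_swap {N : ℕ} (σ₀ σ : Equiv.Perm (Fin N)) {i j : Fin N}
    (h0 : σ₀ j < σ₀ i) (h : σ j < σ i) :
    kendallTau σ₀ σ ≤ kendallTau σ₀ (σ * Equiv.swap i j) := by
  rw [kendallTau_eq_invCount, kendallTau_eq_invCount]
  have key : σ * Equiv.swap i j * σ₀⁻¹ = (σ * σ₀⁻¹) * Equiv.swap (σ₀ j) (σ₀ i) := by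
    rw [Equiv.swap_apply_apply σ₀ j i, Equiv.swap_comm j i]
    group
  rw [key]
  apply invCount_le_mul_swap _ h0
  simpa [Equiv.Perm.mul_apply, Equiv.Perm.inv_apply_self] using h

lemma kendallTau_self {N : ℕ} (σ₀ : Equiv.Perm (Fin N)) : kendallTau σ₀ σ₀ = 0 := by
  unfold kendallTau
  rw [Finset.card_eq_zero, Finset.filter_eq_empty_iff]
  rintro p -
  rintro ⟨_, ⟨ha, hb⟩ | ⟨ha, hb⟩⟩ <;> exact absurd hb (not_lt.2 ha.le)

lemma kendallTau_swap_ne_zero {N : ℕ} (σ₀ : Equiv.Perm (Fin N)) {i j : Fin N}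
    (h : σ₀ j < σ₀ i) : kendallTau σ₀ (σ₀ * Equiv.swap i j) ≠ 0 := by
  have hij : i ≠ j := fun e => by simp [e] at h
  unfold kendallTau
  rw [← Nat.pos_iff_ne_zero, Finset.card_pos]
  rcases lt_or_gt_of_ne hij with hlt | hlt
  · refine ⟨(i, j), ?_⟩
    rw [Finset.mem_filter]
    simp only [Finset.mem_univ, true_and, Equiv.Perm.mul_apply,
      Equiv.swap_apply_left, Equiv.swap_apply_right]
    exact ⟨hlt, Or.inr ⟨h, h⟩⟩
  · refine ⟨(j, i), ?_⟩
    rw [Finset.mem_filter]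
    simp only [Finset.mem_univ, true_and, Equiv.Perm.mul_apply,
      Equiv.swap_apply_left, Equiv.swap_apply_right]
    exact ⟨hlt, Or.inl ⟨h, h⟩⟩

lemma mallowsZ_pos (N : ℕ) {φ : ℝ} (hφ0 : 0 < φ) (σ₀ : Equiv.Perm (Fin N)) :
    0 < mallowsZ N φ σ₀ :=
  Finset.sum_pos (fun σ _ => pow_pos hφ0 _) ⟨1, Finset.mem_univ 1⟩

lemma mallows_exp_lt {N : ℕ} {φ : ℝ} (hφ0 : 0 < φ) (hφ1 : φ < 1) (σ₀ : Equiv.Perm (Fin N))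
    {i j : Fin N} (h : σ₀ j < σ₀ i) : mallowsExp N φ σ₀ j < mallowsExp N φ σ₀ i := by
  classical
  have hij : i ≠ j := fun e => by simp [e] at h
  have hZ := mallowsZ_pos N hφ0 σ₀
  unfold mallowsExp
  rw [div_lt_div_iff_of_pos_right hZ]
  rw [← sub_pos, ← Finset.sum_sub_distrib]
  have hFeq : ∀ σ : Equiv.Perm (Fin N),
      ((σ i : ℕ) : ℝ) * φ ^ kendallTau σ₀ σ - ((σ j : ℕ) : ℝ) * φ ^ kendallTau σ₀ σ
        = (((σ i : ℕ) : ℝ) - ((σ j : ℕ) : ℝ)) * φ ^ kendallTau σ₀ σ :=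
    fun σ => (sub_mul _ _ _).symm
  rw [Finset.sum_congr rfl fun σ _ => hFeq σ]
  set F : Equiv.Perm (Fin N) → ℝ :=
    fun σ => (((σ i : ℕ) : ℝ) - ((σ j : ℕ) : ℝ)) * φ ^ kendallTau σ₀ σ with hF
  rw [← Finset.sum_filter_add_sum_filter_not Finset.univ
    (fun σ : Equiv.Perm (Fin N) => σ j < σ i) F]
  have hswap : ∑ σ ∈ Finset.univ.filter (fun σ : Equiv.Perm (Fin N) => ¬ σ j < σ i), F σ
      = ∑ σ ∈ Finset.univ.filter (fun σ : Equiv.Perm (Fin N) => σ j < σ i),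
          F (σ * Equiv.swap i j) := by
    apply Finset.sum_nbij' (i := fun σ => σ * Equiv.swap i j)
      (j := fun σ => σ * Equiv.swap i j)
    · intro σ hσ
      simp only [Finset.mem_filter, Finset.mem_univ, true_and, not_lt] at hσ ⊢
      have hne : σ i ≠ σ j := fun e => hij (σ.injective e)
      have : σ i < σ j := lt_of_le_of_ne hσ hne
      simpa [Equiv.Perm.mul_apply] using this
    · intro σ hσ
      simp only [Finset.mem_filter, Finset.mem_univ, true_and] at hσ ⊢
      simp only [Equiv.Perm.mul_apply, Equiv.swap_apply_left, Equiv.swap_apply_right]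
      exact not_lt.2 hσ.le
    · intro σ _; rw [mul_assoc, Equiv.swap_mul_self, mul_one]
    · intro σ _; rw [mul_assoc, Equiv.swap_mul_self, mul_one]
    · intro σ _; rw [mul_assoc, Equiv.swap_mul_self, mul_one]
  rw [hswap, ← Finset.sum_add_distrib]
  apply Finset.sum_pos'
  · intro σ hσ
    simp only [Finset.mem_filter, Finset.mem_univ, true_and] at hσ
    have hle : kendallTau σ₀ σ ≤ kendallTau σ₀ (σ * Equiv.swap i j) :=
      kendallTau_le_mul_swap σ₀ σ h hσ
    have hpow : φ ^ kendallTau σ₀ (σ * Equiv.swap i j) ≤ φ ^ kendallTau σ₀ σ :=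
      pow_le_pow_of_le_one hφ0.le hφ1.le hle
    have hcast : ((σ j : ℕ) : ℝ) ≤ ((σ i : ℕ) : ℝ) := by exact_mod_cast hσ.le
    have e1 : ((σ * Equiv.swap i j) i : ℕ) = ((σ j : ℕ)) := by
      simp [Equiv.Perm.mul_apply]
    have e2 : ((σ * Equiv.swap i j) j : ℕ) = ((σ i : ℕ)) := by
      simp [Equiv.Perm.mul_apply]
    rw [hF]
    simp only [e1, e2]
    nlinarith [pow_pos hφ0 (kendallTau σ₀ σ), pow_pos hφ0 (kendallTau σ₀ (σ * Equiv.swap i j))]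
  · refine ⟨σ₀, ?_, ?_⟩
    · simp only [Finset.mem_filter, Finset.mem_univ, true_and]; exact h
    · have e1 : ((σ₀ * Equiv.swap i j) i : ℕ) = ((σ₀ j : ℕ)) := by
        simp [Equiv.Perm.mul_apply]
      have e2 : ((σ₀ * Equiv.swap i j) j : ℕ) = ((σ₀ i : ℕ)) := by
        simp [Equiv.Perm.mul_apply]
      have hpow : φ ^ kendallTau σ₀ (σ₀ * Equiv.swap i j) < 1 :=
        pow_lt_one₀ hφ0.le hφ1 (kendallTau_swap_ne_zero σ₀ h)
      have hcast : ((σ₀ j : ℕ) : ℝ) < ((σ₀ i : ℕ) : ℝ) := by exact_mod_cast h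
      rw [hF]
      simp only [e1, e2, kendallTau_self, pow_zero]
      nlinarith

theorem mallows_expectation_order (N : ℕ) (φ : ℝ)
    (hφ0 : 0 < φ) (hφ1 : φ < 1) (σ₀ : Equiv.Perm (Fin N)) (i j : Fin N) :
    mallowsExp N φ σ₀ i > mallowsExp N φ σ₀ j ↔ σ₀ j < σ₀ i := by
  constructor
  · intro hE
    rcases lt_trichotomy (σ₀ j) (σ₀ i) with h | h | h
    · exact h
    · have : j = i := σ₀.injective h
      rw [this] at hE
      exact absurd hE (lt_irrefl _)
    · exact absurd (mallows_exp_lt hφ0 hφ1 σ₀ h) (asymm hE)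
  · exact fun h => mallows_exp_lt hφ0 hφ1 σ₀ h
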